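/- Let 𝒦 be a differential field and a ∈ 𝒦. The 3×3 matrix differential operator ∂·diag(1,1,0) + M, where M is the matrix with rows (0, a', −a), (0, 0, 1), (1, a, 0), is not invertible in Mat_{3×3}(𝒦((∂⁻¹))) for any a, even though the constant-coefficient matrix M itself is invertible whenever a' ≠ 0. -/

import Mathlib

open scoped BigOperators

/-- Generalized binomial coefficient `binom(m, i)` for `m ∈ ℤ`, `i ∈ ℕ`. -/
def intBin (m : ℤ) (i : ℕ) : ℤ :=
  (∏ j ∈ Finset.range i, (m - (j : ℤ))) / (Nat.factorial i : ℤ)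

/-- Coefficient of `∂^k` in the composition `f(∂) ∘ g(∂)` of pseudodifferential
operators encoded by their coefficient functions. -/
noncomputable def pdoMulCoeff {K : Type*} [Field K] (d : K → K) (f g : ℤ → K) (k : ℤ) : K :=
  ∑ᶠ (m : ℤ) (i : ℕ), f m * ((intBin m i : ℤ) : K) * d^[i] (g (k - m + i))

/-- Product of matrices of pseudodifferential operators. -/
noncomputable def pdoMatMul {K : Type*} [Field K] (d : K → K) {l m n : Type*} [Fintype m]
    (A : Matrix l m (ℤ → K)) (B : Matrix m n (ℤ → K)) : Matrix l n (ℤ → K) :=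
  Matrix.of fun i j => ∑ t : m, pdoMulCoeff d (A i t) (B t j)

/-- The identity matrix pseudodifferential operator. -/
def pdoOne {K : Type*} [Field K] {n : Type*} [DecidableEq n] : Matrix n n (ℤ → K) :=
  Matrix.of fun i j k => if i = j ∧ k = 0 then 1 else 0

/-- Coefficients vanish in sufficiently large degree. -/
def pdoBounded {K : Type*} [Zero K] {l m : Type*} (A : Matrix l m (ℤ → K)) : Prop :=
  ∃ n : ℤ, ∀ i j k, n < k → A i j k = 0

/-- `B` is a two-sided inverse of `A` in `Mat(𝒦((∂⁻¹)))`. -/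
noncomputable def pdoInverse {K : Type*} [Field K] (d : K → K) {n : Type*} [Fintype n]
    [DecidableEq n] (A B : Matrix n n (ℤ → K)) : Prop :=
  pdoMatMul d A B = pdoOne ∧ pdoMatMul d B A = pdoOne

/-- The constant matrix `M` of Example 2.15, with rows `(0, a', −a)`, `(0,0,1)`, `(1,a,0)`. -/
noncomputable def exMat {K : Type*} [Field K] (d : Derivation ℤ K K) (a : K) :
    Matrix (Fin 3) (Fin 3) K :=
  !![0, d a, -a; 0, 0, 1; 1, a, 0]

/-- The `3×3` matrix differential operator `∂·diag(1,1,0) + M` of Example 2.15. -/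
noncomputable def exOp {K : Type*} [Field K] (d : Derivation ℤ K K) (a : K) :
    Matrix (Fin 3) (Fin 3) (ℤ → K) :=
  Matrix.of fun i j k =>
    if k = 1 then (Matrix.diagonal ![1, 1, 0] : Matrix (Fin 3) (Fin 3) K) i j
    else if k = 0 then exMat d a i j else 0

/-- **Example 2.15 (ex:generic).**  For every `a ∈ 𝒦`, the operator `∂·diag(1,1,0) + M`
with `M = [[0,a',−a],[0,0,1],[1,a,0]]` is *not* invertible in `Mat_{3×3}(𝒦((∂⁻¹)))`,
even though the constant matrix `M` itself is invertible whenever `a' ≠ 0`. -/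

lemma intBin_zero_pos' {i : ℕ} (hi : i ≠ 0) : intBin 0 i = 0 := by
  unfold intBin
  rw [Finset.prod_eq_zero (Finset.mem_range.2 (Nat.pos_of_ne_zero hi)) (by simp)]
  simp

lemma intBin_one_ge' {i : ℕ} (hi : 2 ≤ i) : intBin 1 i = 0 := by
  unfold intBin
  rw [Finset.prod_eq_zero (i := 1) (Finset.mem_range.2 hi) (by simp)]
  simp

lemma intBin_zero_zero' : intBin 0 0 = 1 := by simp [intBin]
lemma intBin_one_zero' : intBin 1 0 = 1 := by simp [intBin]
lemma intBin_one_one' : intBin 1 1 = 1 := by simp [intBin]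

lemma pdoMulCoeff_01 {K : Type*} [Field K] (d : K → K) (f g : ℤ → K)
    (hf : ∀ m : ℤ, m ≠ 0 → m ≠ 1 → f m = 0) (k : ℤ) :
    pdoMulCoeff d f g k = f 0 * g k + (f 1 * g (k - 1) + f 1 * d (g k)) := by
  unfold pdoMulCoeff
  have h0 : ∀ m : ℤ, m ∉ ({0, 1} : Finset ℤ) →
      (∑ᶠ i : ℕ, f m * ((intBin m i : ℤ) : K) * d^[i] (g (k - m + i))) = 0 := by
    intro m hm
    simp only [Finset.mem_insert, Finset.mem_singleton, not_or] at hm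
    rw [finsum_eq_single _ 0 (by intro i hi; rw [hf m hm.1 hm.2]; ring)]
    rw [hf m hm.1 hm.2]; ring
  rw [finsum_eq_sum_of_support_subset _ (s := ({0, 1} : Finset ℤ))
    (fun m hm => by by_contra h; exact hm (h0 m h))]
  rw [Finset.sum_pair (by norm_num)]
  congr 1
  · rw [finsum_eq_single _ 0 (by intro i hi; rw [intBin_zero_pos' hi]; push_cast; ring)]
    simp [intBin_zero_zero']
  · have hsupp : (Function.support fun i : ℕ =>
        f 1 * ((intBin 1 i : ℤ) : K) * d^[i] (g (k - 1 + i))) ⊆ ({0, 1} : Finset ℕ) := by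
      intro i hi
      simp only [Finset.coe_insert, Finset.coe_singleton, Set.mem_insert_iff,
        Set.mem_singleton_iff]
      by_contra h
      push_neg at h
      have : 2 ≤ i := by omega
      exact hi (by simp only [intBin_one_ge' this]; push_cast; ring)
    rw [finsum_eq_sum_of_support_subset _ hsupp, Finset.sum_pair (by norm_num)]
    have e1 : k - 1 + ((0:ℕ):ℤ) = k - 1 := by push_cast; ring
    have e2 : k - 1 + ((1:ℕ):ℤ) = k := by push_cast; ring
    rw [e1, e2]
    simp [intBin_one_zero', intBin_one_one']

theorem statement10 {K : Type*} [Field K] (d : Derivation ℤ K K) (a : K) :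
    (¬ ∃ B : Matrix (Fin 3) (Fin 3) (ℤ → K),
        pdoBounded B ∧ pdoInverse ⇑d (exOp d a) B) ∧
    (d a ≠ 0 → IsUnit (exMat d a)) := by
  constructor
  · rintro ⟨B, -, h1, -⟩
    have hL : ∀ (i t : Fin 3) (m : ℤ), m ≠ 0 → m ≠ 1 → exOp d a i t m = 0 := by
      intro i t m h0 h1
      simp [exOp, h0, h1]
    have key : ∀ (i j : Fin 3) (k : ℤ),
        (exOp d a i 0 0 * B 0 j k + (exOp d a i 0 1 * B 0 j (k - 1)
            + exOp d a i 0 1 * d (B 0 j k)))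
        + (exOp d a i 1 0 * B 1 j k + (exOp d a i 1 1 * B 1 j (k - 1)
            + exOp d a i 1 1 * d (B 1 j k)))
        + (exOp d a i 2 0 * B 2 j k + (exOp d a i 2 1 * B 2 j (k - 1)
            + exOp d a i 2 1 * d (B 2 j k))) = pdoOne i j k := by
      intro i j k
      have h := congrFun (congrFun (congrFun h1 i) j) k
      simp only [pdoMatMul, Matrix.of_apply, Finset.sum_apply, Fin.sum_univ_three, Pi.add_apply] at h
      rw [pdoMulCoeff_01 _ _ _ (hL i 0), pdoMulCoeff_01 _ _ _ (hL i 1),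
        pdoMulCoeff_01 _ _ _ (hL i 2)] at h
      exact h
    have hE : ∀ (i t : Fin 3), exOp d a i t 0 = exMat d a i t := by
      intro i t; simp [exOp]
    have hE1 : ∀ (i t : Fin 3),
        exOp d a i t 1 = (Matrix.diagonal ![1, 1, 0] : Matrix (Fin 3) (Fin 3) K) i t := by
      intro i t; simp [exOp]
    have E2 : ∀ k : ℤ, B 0 0 k + a * B 1 0 k = 0 := by
      intro k
      have h := key 2 0 k
      simp only [hE, hE1, exMat, pdoOne] at h
      norm_num [Matrix.diagonal, Fin.ext_iff] at h
      simp [Matrix.cons_val_two, Matrix.vecHead, Matrix.vecTail] at h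
      linear_combination h
    have E1 : B 1 0 (-1) + d (B 1 0 0) + B 2 0 0 = 0 := by
      have h := key 1 0 0
      simp only [hE, hE1, exMat, pdoOne] at h
      norm_num [Matrix.diagonal, Fin.ext_iff] at h
      simp [Matrix.cons_val_two, Matrix.vecHead, Matrix.vecTail] at h
      linear_combination h
    have E0 : B 0 0 (-1) + d (B 0 0 0) + d a * B 1 0 0 + (-a) * B 2 0 0 = 1 := by
      have h := key 0 0 0
      simp only [hE, hE1, exMat, pdoOne] at h
      norm_num [Matrix.diagonal, Fin.ext_iff] at h
      simp [Matrix.cons_val_two, Matrix.vecHead, Matrix.vecTail] at h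
      linear_combination h
    have hB000 : B 0 0 0 = -(a * B 1 0 0) := by linear_combination E2 0
    have hd0 : d (B 0 0 0) = -(d a * B 1 0 0 + a * d (B 1 0 0)) := by
      rw [hB000, map_neg, Derivation.leibniz, smul_eq_mul, smul_eq_mul]
      ring
    have hc : (1 : K) = 0 := by
      calc (1 : K) = B 0 0 (-1) + d (B 0 0 0) + d a * B 1 0 0 + (-a) * B 2 0 0 := E0.symm
        _ = 0 := by
            have hB2 : B 2 0 0 = -(B 1 0 (-1) + d (B 1 0 0)) := by linear_combination E1
            have hBm1 : B 0 0 (-1) = -(a * B 1 0 (-1)) := by linear_combination E2 (-1)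
            rw [hBm1, hd0, hB2]
            ring
    exact one_ne_zero hc
  · intro h
    rw [Matrix.isUnit_iff_isUnit_det]
    have hdet : (exMat d a).det = d a := by
      simp [exMat, Matrix.det_fin_three]
    rw [hdet]
    exact h.isUnit
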